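/- For real numbers x_{1,b}, x_{2,b} ≥ 0 indexed by a finite set B with at least 2 elements, satisfying x_{1,b} + x_{2,b} ≤ 1 for each b, the following inequality holds: ∏_{b∈B}(1 - x_{1,b} - x_{2,b}) + ∑_{b∈B} x_{2,b} ∏_{b'≠b}(1 - x_{1,b'} - x_{2,b'}) ≤ ∏_{b∈B}(1 - x_{1,b}) · [∏_{b∈B}(1 - x_{2,b}) + ∑_{b∈B} x_{2,b} ∏_{b'≠b}(1 - x_{2,b'})]. -/
import Mathlib

theorem aux0 {ι : Type*} [DecidableEq ι] (B : Finset ι)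
    (x1 x2 : ι → ℝ)
    (h1 : ∀ b ∈ B, 0 ≤ x1 b) (h2 : ∀ b ∈ B, 0 ≤ x2 b)
    (hsum : ∀ b ∈ B, x1 b + x2 b ≤ 1) :
    (∏ b ∈ B, (1 - x1 b - x2 b)) +
      ∑ b ∈ B, x2 b * ∏ b' ∈ B.erase b, (1 - x1 b' - x2 b') ≤
    (∏ b ∈ B, (1 - x1 b)) *
      ((∏ b ∈ B, (1 - x2 b)) +
        ∑ b ∈ B, x2 b * ∏ b' ∈ B.erase b, (1 - x2 b')) := by
  induction B using Finset.induction_on with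
  | empty => simp
  | @insert b0 S hb0 ih =>
    have hα : 0 ≤ x1 b0 := h1 b0 (Finset.mem_insert_self _ _)
    have hγ : 0 ≤ x2 b0 := h2 b0 (Finset.mem_insert_self _ _)
    have hαγ : x1 b0 + x2 b0 ≤ 1 := hsum b0 (Finset.mem_insert_self _ _)
    have h1S : ∀ b ∈ S, 0 ≤ x1 b := fun b hb => h1 b (Finset.mem_insert_of_mem hb)
    have h2S : ∀ b ∈ S, 0 ≤ x2 b := fun b hb => h2 b (Finset.mem_insert_of_mem hb)
    have hsumS : ∀ b ∈ S, x1 b + x2 b ≤ 1 := fun b hb => hsum b (Finset.mem_insert_of_mem hb)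
    have IH := ih h1S h2S hsumS
    have key : ∀ (f : ι → ℝ), ∑ b ∈ S, x2 b * ∏ b' ∈ (insert b0 S).erase b, f b' =
        f b0 * ∑ b ∈ S, x2 b * ∏ b' ∈ S.erase b, f b' := by
      intro f
      rw [Finset.mul_sum]
      refine Finset.sum_congr rfl fun b hb => ?_
      have hne : b ≠ b0 := fun h => hb0 (h ▸ hb)
      have hb0e : b0 ∉ S.erase b := fun h => hb0 (Finset.mem_of_mem_erase h)
      rw [Finset.erase_insert_of_ne hne.symm, Finset.prod_insert hb0e]
      ring
    rw [Finset.prod_insert hb0, Finset.prod_insert hb0, Finset.prod_insert hb0,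
      Finset.sum_insert hb0, Finset.sum_insert hb0, Finset.erase_insert hb0, key, key]
    set α := x1 b0
    set γ := x2 b0
    set Ps := ∏ b ∈ S, (1 - x1 b - x2 b) with hPs
    set Pa := ∏ b ∈ S, (1 - x1 b) with hPa
    set Q := ∏ b ∈ S, (1 - x2 b) with hQ
    set Ms := ∑ b ∈ S, x2 b * ∏ b' ∈ S.erase b, (1 - x1 b' - x2 b') with hMs
    set Mc := ∑ b ∈ S, x2 b * ∏ b' ∈ S.erase b, (1 - x2 b') with hMc
    have hPs0 : 0 ≤ Ps :=
      Finset.prod_nonneg fun b hb => by have := hsumS b hb; linarith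
    have hMs0 : 0 ≤ Ms := by
      refine Finset.sum_nonneg fun b hb => ?_
      refine mul_nonneg (h2S b hb) (Finset.prod_nonneg fun b' hb' => ?_)
      have := hsumS b' (Finset.mem_of_mem_erase hb')
      linarith
    have hPsPaQ : Ps ≤ Pa * Q := by
      rw [hPs, hPa, hQ, ← Finset.prod_mul_distrib]
      refine Finset.prod_le_prod (fun b hb => by have := hsumS b hb; linarith)
        (fun b hb => ?_)
      have hx1 := h1S b hb
      have hx2 := h2S b hb
      nlinarith [mul_nonneg hx1 hx2]
    -- Goal is an algebraic inequality; combine with IH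
    have hIH' : 0 ≤ (1 - α) * (1 - γ) * ((Pa * (Q + Mc)) - (Ps + Ms)) := by
      have : 0 ≤ (1 - α) * (1 - γ) := by nlinarith
      exact mul_nonneg this (by linarith)
    have h2' : 0 ≤ γ * (1 - α) * (Pa * Q - Ps) := by
      have : 0 ≤ γ * (1 - α) := by nlinarith
      exact mul_nonneg this (by linarith)
    have h3' : 0 ≤ γ * α * ((Ps + Ms) - Ps) := by
      exact mul_nonneg (mul_nonneg hγ hα) (by linarith)
    nlinarith [hIH', h2', h3']

theorem stmt0 {ι : Type*} [DecidableEq ι] (B : Finset ι) (hB : 2 ≤ B.card)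
    (x1 x2 : ι → ℝ)
    (h1 : ∀ b ∈ B, 0 ≤ x1 b) (h2 : ∀ b ∈ B, 0 ≤ x2 b)
    (hsum : ∀ b ∈ B, x1 b + x2 b ≤ 1) :
    (∏ b ∈ B, (1 - x1 b - x2 b)) +
      ∑ b ∈ B, x2 b * ∏ b' ∈ B.erase b, (1 - x1 b' - x2 b') ≤
    (∏ b ∈ B, (1 - x1 b)) *
      ((∏ b ∈ B, (1 - x2 b)) +
        ∑ b ∈ B, x2 b * ∏ b' ∈ B.erase b, (1 - x2 b')) := by
  exact aux0 B x1 x2 h1 h2 hsum
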